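/- Consider the generic GCN layer H_{l+1} = σ(ÂH_lW_l), where σ is entrywise ReLU, is the augmented normalized adjacency of a graph with eigenvalue-1 eigenspace spanned by the non-negative orthogonal basis Ê, λ < 1 is the largest absolute value among the remaining eigenvalues of Â, and every W_l has largest singular value at most s. Then d_M(H_{l+1}) ≤ sλ · d_M(H_l), and consequently d_M(H_l) ≤ (sλ)^l d_M(H_0). In particular if sλ < 1, then d_M(H_l) → 0 as l → ∞. -/

import Mathlib

open Matrix Filter

/-- The Frobenius norm on real `N × C` matrices. -/
noncomputable def frobNorm {N C : ℕ} (H : Matrix (Fin N) (Fin C) ℝ) : ℝ :=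
  Real.sqrt (∑ i, ∑ j, (H i j) ^ 2)

/-- The Frobenius distance from a matrix to a set of matrices. -/
noncomputable def distTo {N C : ℕ} (S : Set (Matrix (Fin N) (Fin C) ℝ))
    (H : Matrix (Fin N) (Fin C) ℝ) : ℝ :=
  sInf ((fun Y => frobNorm (H - Y)) '' S)

/-- Entrywise ReLU of a matrix. -/
def relu {N C : ℕ} (H : Matrix (Fin N) (Fin C) ℝ) : Matrix (Fin N) (Fin C) ℝ :=
  Matrix.of fun i j => max (H i j) 0

/-! ### Auxiliary lemmas -/

noncomputable def fsq {N C : ℕ} (H : Matrix (Fin N) (Fin C) ℝ) : ℝ := ∑ i, ∑ j, (H i j)^2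

lemma fsq_nonneg {N C : ℕ} (H : Matrix (Fin N) (Fin C) ℝ) : 0 ≤ fsq H := by
  apply Finset.sum_nonneg; intro i _; apply Finset.sum_nonneg; intro j _; positivity

lemma frob_eq {N C : ℕ} (H : Matrix (Fin N) (Fin C) ℝ) : frobNorm H = Real.sqrt (fsq H) := rfl

lemma frob_nonneg {N C : ℕ} (H : Matrix (Fin N) (Fin C) ℝ) : 0 ≤ frobNorm H :=
  Real.sqrt_nonneg _

lemma frob_mono {N C : ℕ} {X Y : Matrix (Fin N) (Fin C) ℝ} (h : fsq X ≤ fsq Y) :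
    frobNorm X ≤ frobNorm Y := Real.sqrt_le_sqrt h

lemma frob_scale {N C : ℕ} {k : ℝ} (hk : 0 ≤ k) {A B : Matrix (Fin N) (Fin C) ℝ}
    (h : fsq A ≤ k^2 * fsq B) : frobNorm A ≤ k * frobNorm B := by
  rw [frob_eq, frob_eq]
  calc Real.sqrt (fsq A) ≤ Real.sqrt (k^2 * fsq B) := Real.sqrt_le_sqrt h
    _ = Real.sqrt (k^2) * Real.sqrt (fsq B) := Real.sqrt_mul (sq_nonneg k) _
    _ = k * Real.sqrt (fsq B) := by rw [Real.sqrt_sq hk]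

lemma inner_zero {N M C : ℕ} (E : Matrix (Fin N) (Fin M) ℝ)
    (R : Matrix (Fin N) (Fin C) ℝ) (hR : Eᵀ * R = 0) (X : Matrix (Fin M) (Fin C) ℝ) :
    ∑ i, ∑ j, R i j * (E * X) i j = 0 := by
  have h1 : ∀ i j, R i j * (E * X) i j = ∑ m, E i m * R i j * X m j := by
    intro i j
    simp only [Matrix.mul_apply, Finset.mul_sum]
    exact Finset.sum_congr rfl fun m _ => by ring
  simp only [h1]
  rw [Finset.sum_comm]
  have h2 : ∀ j : Fin C, (∑ i, ∑ m, E i m * R i j * X m j)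
      = ∑ m, (∑ i, E i m * R i j) * X m j := by
    intro j
    rw [Finset.sum_comm]
    exact Finset.sum_congr rfl fun m _ => by rw [Finset.sum_mul]
  simp only [h2]
  have h3 : ∀ m j, (∑ i, E i m * R i j) = 0 := by
    intro m j
    have := congrFun (congrFun hR m) j
    simpa [Matrix.mul_apply, Matrix.transpose_apply] using this
  simp [h3]

lemma fsq_add {N M C : ℕ} (E : Matrix (Fin N) (Fin M) ℝ)
    (R : Matrix (Fin N) (Fin C) ℝ) (hR : Eᵀ * R = 0) (X : Matrix (Fin M) (Fin C) ℝ) :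
    fsq (R + E * X) = fsq R + fsq (E * X) := by
  have h := inner_zero E R hR X
  unfold fsq
  have : ∀ i j, (R + E*X) i j ^ 2 = R i j ^2 + 2 * (R i j * (E*X) i j) + (E*X) i j ^2 := by
    intro i j; simp [Matrix.add_apply]; ring
  simp only [this, Finset.sum_add_distrib, ← Finset.mul_sum]
  rw [h]
  ring

lemma resid_ortho {N M C : ℕ} (E : Matrix (Fin N) (Fin M) ℝ) (hortho : Eᵀ * E = 1)
    (X : Matrix (Fin N) (Fin C) ℝ) : Eᵀ * (X - E * (Eᵀ * X)) = 0 := by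
  rw [Matrix.mul_sub, ← Matrix.mul_assoc, ← Matrix.mul_assoc, hortho, Matrix.one_mul, sub_self]

lemma dist_formula {N M C : ℕ} (E : Matrix (Fin N) (Fin M) ℝ) (hortho : Eᵀ * E = 1)
    (MS : Set (Matrix (Fin N) (Fin C) ℝ))
    (hMS : MS = {H | ∃ Cm : Matrix (Fin M) (Fin C) ℝ, H = E * Cm})
    (X : Matrix (Fin N) (Fin C) ℝ) :
    distTo MS X = frobNorm (X - E * (Eᵀ * X)) := by
  have hmem : E * (Eᵀ * X) ∈ MS := by rw [hMS]; exact ⟨Eᵀ * X, rfl⟩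
  apply le_antisymm
  · apply csInf_le
    · exact ⟨0, fun y hy => by obtain ⟨Y, _, rfl⟩ := hy; exact frob_nonneg _⟩
    · exact ⟨E * (Eᵀ * X), hmem, rfl⟩
  · apply le_csInf
    · exact ⟨_, ⟨E * (Eᵀ * X), hmem, rfl⟩⟩
    · rintro y ⟨Y, hY, rfl⟩
      rw [hMS] at hY
      obtain ⟨Cm, rfl⟩ := hY
      apply frob_mono
      have hdecomp : X - E * Cm = (X - E * (Eᵀ * X)) + E * (Eᵀ * X - Cm) := by
        rw [Matrix.mul_sub]; abel
      rw [hdecomp, fsq_add E _ (resid_ortho E hortho X)]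
      have := fsq_nonneg (E * (Eᵀ * X - Cm))
      linarith

lemma dist_le_of_mem {N M C : ℕ} {E : Matrix (Fin N) (Fin M) ℝ}
    {MS : Set (Matrix (Fin N) (Fin C) ℝ)}
    (hMS : MS = {H | ∃ Cm : Matrix (Fin M) (Fin C) ℝ, H = E * Cm})
    (X : Matrix (Fin N) (Fin C) ℝ) (Cm : Matrix (Fin M) (Fin C) ℝ) :
    distTo MS X ≤ frobNorm (X - E * Cm) := by
  apply csInf_le
  · exact ⟨0, fun y hy => by obtain ⟨Y, _, rfl⟩ := hy; exact frob_nonneg _⟩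
  · exact ⟨E * Cm, by rw [hMS]; exact ⟨Cm, rfl⟩, rfl⟩

lemma relu_mul {N M C : ℕ} (E : Matrix (Fin N) (Fin M) ℝ)
    (hnonneg : ∀ i m, 0 ≤ E i m)
    (hdisj : ∀ i m m', E i m ≠ 0 → E i m' ≠ 0 → m = m')
    (Cm : Matrix (Fin M) (Fin C) ℝ) :
    relu (E * Cm) = E * relu Cm := by
  ext i j
  show max ((E * Cm) i j) 0 = (E * relu Cm) i j
  by_cases hex : ∃ m0, E i m0 ≠ 0
  · obtain ⟨m0, hm0⟩ := hex
    have hsum : ∀ X : Fin M → ℝ, (∑ m, E i m * X m) = E i m0 * X m0 := by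
      intro X
      apply Finset.sum_eq_single m0
      · intro m _ hm
        have : E i m = 0 := by
          by_contra h
          exact hm (hdisj i m m0 h hm0)
        rw [this, zero_mul]
      · intro h; exact absurd (Finset.mem_univ m0) h
    rw [Matrix.mul_apply, Matrix.mul_apply, hsum, hsum]
    show max (E i m0 * Cm m0 j) 0 = E i m0 * max (Cm m0 j) 0
    rw [mul_max_of_nonneg _ _ (hnonneg i m0), mul_zero]
  · push_neg at hex
    rw [Matrix.mul_apply, Matrix.mul_apply]
    simp [hex]

lemma fsq_relu_sub {N C : ℕ} (X Y : Matrix (Fin N) (Fin C) ℝ) :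
    fsq (relu X - relu Y) ≤ fsq (X - Y) := by
  unfold fsq
  apply Finset.sum_le_sum; intro i _
  apply Finset.sum_le_sum; intro j _
  have h : |max (X i j) 0 - max (Y i j) 0| ≤ |X i j - Y i j| :=
    abs_max_sub_max_le_abs _ _ _
  have := pow_le_pow_left₀ (abs_nonneg _) h 2
  rw [sq_abs, sq_abs] at this
  simpa [relu, Matrix.sub_apply] using this

lemma euclid_norm_sq (N : ℕ) (x : EuclideanSpace ℝ (Fin N)) : ‖x‖^2 = ∑ i, (x i)^2 := by
  rw [EuclideanSpace.norm_eq, Real.sq_sqrt (by positivity)]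
  simp [sq_abs]

lemma spectral_vec (N M : ℕ) (hatA : Matrix (Fin N) (Fin N) ℝ) (hsymm : hatA.IsSymm)
    (E : Matrix (Fin N) (Fin M) ℝ)
    (lam : ℝ)
    (hEig1 : ∀ v : Fin N → ℝ, hatA.mulVec v = v ↔
      v ∈ Submodule.span ℝ (Set.range fun m => fun i => E i m))
    (hOther : ∀ (μ : ℝ) (v : Fin N → ℝ), v ≠ 0 → hatA.mulVec v = μ • v →
      μ = 1 ∨ |μ| ≤ lam)
    (v : Fin N → ℝ) (hv : ∀ m, ∑ i, E i m * v i = 0) :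
    ∑ i, (hatA.mulVec v i)^2 ≤ lam^2 * ∑ i, (v i)^2 := by
  have hH : hatA.IsHermitian := by
    rw [Matrix.IsHermitian, Matrix.conjTranspose]
    simp [Matrix.map, starRingEnd_apply, star_trivial]; exact hsymm
  set b := hH.eigenvectorBasis with hb
  set μ := hH.eigenvalues with hμ
  set x : EuclideanSpace ℝ (Fin N) := WithLp.toLp 2 v with hx
  have hperp : ∀ w ∈ Submodule.span ℝ (Set.range fun m => fun i => E i m),
      ∑ i, w i * v i = 0 := by
    intro w hw
    let L : (Fin N → ℝ) →ₗ[ℝ] ℝ :=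
      { toFun := fun w => dotProduct w v
        map_add' := fun a b => add_dotProduct a b v
        map_smul' := fun c a => smul_dotProduct c a v }
    have : Submodule.span ℝ (Set.range fun m => fun i => E i m) ≤ LinearMap.ker L := by
      rw [Submodule.span_le]
      rintro _ ⟨m, rfl⟩
      simpa [L, dotProduct] using hv m
    exact this hw
  have hinner : ∀ k, (inner ℝ (b k) x : ℝ) = ∑ i, b k i * x i := by
    intro k
    simp [PiLp.inner_apply, RCLike.inner_apply, x, mul_comm]
  have hsym := (Matrix.isHermitian_iff_isSymmetric.mp hH)
  have hAx : ∀ k, (inner ℝ (b k) ((Matrix.toEuclideanLin hatA) x) : ℝ)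
      = μ k * inner ℝ (b k) x := by
    intro k
    rw [← hsym (b k) x]
    have heig := hH.mulVec_eigenvectorBasis k
    have : (Matrix.toEuclideanLin hatA) (b k) = μ k • b k := by
      apply (EuclideanSpace.equiv (Fin N) ℝ).injective
      ext i
      simpa [Matrix.toEuclideanLin_apply] using congrFun heig i
    rw [this, inner_smul_left]
    simp [RCLike.conj_to_real]
  set c : Fin N → ℝ := fun k => inner ℝ (b k) x with hc
  have hrepr : ∀ y : EuclideanSpace ℝ (Fin N), ∑ i, (y i)^2 = ∑ k, ((inner ℝ (b k) y : ℝ))^2 := by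
    intro y
    have h1 : ‖y‖^2 = ∑ i, (y i)^2 := euclid_norm_sq N y
    have h2 : ‖b.repr y‖^2 = ‖y‖^2 := by rw [b.repr.norm_map]
    have h3 : ‖b.repr y‖^2 = ∑ k, (b.repr y k)^2 := euclid_norm_sq N (b.repr y)
    have h4 : ∀ k, b.repr y k = inner ℝ (b k) y := fun k => b.repr_apply_apply y k
    rw [← h1, ← h2, h3]
    exact Finset.sum_congr rfl fun k _ => by rw [h4]
  have hAxv : ∀ i, hatA.mulVec v i
      = ((Matrix.toEuclideanLin hatA) x : EuclideanSpace ℝ (Fin N)) i := by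
    intro i
    rfl
  calc ∑ i, (hatA.mulVec v i)^2
      = ∑ i, (((Matrix.toEuclideanLin hatA) x : EuclideanSpace ℝ (Fin N)) i)^2 :=
        Finset.sum_congr rfl fun i _ => by rw [hAxv]
    _ = ∑ k, ((inner ℝ (b k) ((Matrix.toEuclideanLin hatA) x) : ℝ))^2 := hrepr _
    _ = ∑ k, (μ k * c k)^2 := Finset.sum_congr rfl fun k _ => by rw [hAx]
    _ ≤ ∑ k, lam^2 * (c k)^2 := by
        apply Finset.sum_le_sum
        intro k _
        rcases hOther (μ k) (b k) (fun h0 => b.orthonormal.ne_zero k (by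
          apply (EuclideanSpace.equiv (Fin N) ℝ).injective; ext i; exact congrFun h0 i))
          (hH.mulVec_eigenvectorBasis k) with h1 | h2
        · have hbk : (b k : Fin N → ℝ) ∈ Submodule.span ℝ
              (Set.range fun m => fun i => E i m) := by
            rw [← hEig1]
            have := hH.mulVec_eigenvectorBasis k
            rw [← hμ, h1, one_smul] at this
            exact this
          have hck : c k = 0 := by
            show (inner ℝ (b k) x : ℝ) = 0
            rw [hinner k]
            exact hperp _ hbk
          rw [hck]
          simp
        · have hsq : (μ k)^2 ≤ lam^2 := by
            rw [← sq_abs (μ k)]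
            exact pow_le_pow_left₀ (abs_nonneg _) h2 2
          calc (μ k * c k)^2 = (μ k)^2 * (c k)^2 := by ring
            _ ≤ lam^2 * (c k)^2 := by nlinarith [sq_nonneg (c k)]
    _ = lam^2 * ∑ k, (c k)^2 := by rw [Finset.mul_sum]
    _ = lam^2 * ∑ i, (v i)^2 := by rw [← hrepr x]

lemma fsq_mulA {N M C : ℕ} (hatA : Matrix (Fin N) (Fin N) ℝ) (hsymm : hatA.IsSymm)
    (E : Matrix (Fin N) (Fin M) ℝ) (lam : ℝ)
    (hEig1 : ∀ v : Fin N → ℝ, hatA.mulVec v = v ↔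
      v ∈ Submodule.span ℝ (Set.range fun m => fun i => E i m))
    (hOther : ∀ (μ : ℝ) (v : Fin N → ℝ), v ≠ 0 → hatA.mulVec v = μ • v →
      μ = 1 ∨ |μ| ≤ lam)
    (R : Matrix (Fin N) (Fin C) ℝ) (hR : Eᵀ * R = 0) :
    fsq (hatA * R) ≤ lam^2 * fsq R := by
  have hL : fsq (hatA * R) = ∑ j, ∑ i, ((hatA * R) i j)^2 := Finset.sum_comm
  have hRR : fsq R = ∑ j, ∑ i, (R i j)^2 := Finset.sum_comm
  rw [hL, hRR, Finset.mul_sum]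
  apply Finset.sum_le_sum
  intro j _
  have hv : ∀ m, ∑ i, E i m * R i j = 0 := by
    intro m
    have := congrFun (congrFun hR m) j
    simpa [Matrix.mul_apply, Matrix.transpose_apply] using this
  have := spectral_vec N M hatA hsymm E lam hEig1 hOther (fun i => R i j) hv
  calc ∑ i, ((hatA * R) i j)^2 = ∑ i, (hatA.mulVec (fun i => R i j) i)^2 := by
        apply Finset.sum_congr rfl
        intro i _
        rw [Matrix.mul_apply, Matrix.mulVec]
        rfl
    _ ≤ lam^2 * ∑ i, (R i j)^2 := this

lemma fsq_mulW {N C : ℕ} (Wl : Matrix (Fin C) (Fin C) ℝ) (s : ℝ)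
    (hW : ∀ x : Fin C → ℝ, ∑ j, (Matrix.vecMul x Wl j) ^ 2 ≤ s ^ 2 * ∑ j, (x j) ^ 2)
    (X : Matrix (Fin N) (Fin C) ℝ) :
    fsq (X * Wl) ≤ s^2 * fsq X := by
  unfold fsq
  rw [Finset.mul_sum]
  apply Finset.sum_le_sum
  intro i _
  have := hW (fun k => X i k)
  calc ∑ j, ((X * Wl) i j)^2 = ∑ j, (Matrix.vecMul (fun k => X i k) Wl j)^2 := by
        apply Finset.sum_congr rfl
        intro j _
        rw [Matrix.mul_apply, Matrix.vecMul]
        rfl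
    _ ≤ s^2 * ∑ j, (X i j)^2 := this

/-- Generic GCN `H_{l+1} = σ(Â H_l W_l)` over-smooths:
`d_M(H_{l+1}) ≤ sλ·d_M(H_l)`, hence `d_M(H_l) ≤ (sλ)^l d_M(H_0)` and, if
`sλ < 1`, `d_M(H_l) → 0`. -/
theorem gcn_over_smoothing
    (N M C : ℕ) (hatA : Matrix (Fin N) (Fin N) ℝ) (hsymm : hatA.IsSymm)
    (E : Matrix (Fin N) (Fin M) ℝ) (hortho : Eᵀ * E = 1)
    (hnonneg : ∀ i m, 0 ≤ E i m)
    (hdisj : ∀ i m m', E i m ≠ 0 → E i m' ≠ 0 → m = m')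
    (lam : ℝ) (hlam0 : 0 ≤ lam) (hlam1 : lam < 1)
    (hEig1 : ∀ v : Fin N → ℝ, hatA.mulVec v = v ↔
      v ∈ Submodule.span ℝ (Set.range fun m => fun i => E i m))
    (hOther : ∀ (μ : ℝ) (v : Fin N → ℝ), v ≠ 0 → hatA.mulVec v = μ • v →
      μ = 1 ∨ |μ| ≤ lam)
    (s : ℝ) (hs : 0 ≤ s)
    (W : ℕ → Matrix (Fin C) (Fin C) ℝ)
    (hW : ∀ l, ∀ x : Fin C → ℝ,
      ∑ j, (Matrix.vecMul x (W l) j) ^ 2 ≤ s ^ 2 * ∑ j, (x j) ^ 2)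
    (MS : Set (Matrix (Fin N) (Fin C) ℝ))
    (hMS : MS = {H | ∃ Cm : Matrix (Fin M) (Fin C) ℝ, H = E * Cm})
    (H : ℕ → Matrix (Fin N) (Fin C) ℝ)
    (hrec : ∀ l, H (l + 1) = relu (hatA * H l * W l)) :
    (∀ l, distTo MS (H (l + 1)) ≤ s * lam * distTo MS (H l)) ∧
    (∀ l, distTo MS (H l) ≤ (s * lam) ^ l * distTo MS (H 0)) ∧
    (s * lam < 1 → Tendsto (fun l => distTo MS (H l)) atTop (nhds 0)) := by
  -- step (iii): relu
  have step_relu : ∀ X : Matrix (Fin N) (Fin C) ℝ, distTo MS (relu X) ≤ distTo MS X := by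
    intro X
    rw [dist_formula E hortho MS hMS X]
    calc distTo MS (relu X) ≤ frobNorm (relu X - E * relu (Eᵀ * X)) :=
          dist_le_of_mem hMS _ _
      _ = frobNorm (relu X - relu (E * (Eᵀ * X))) := by
          rw [relu_mul E hnonneg hdisj]
      _ ≤ frobNorm (X - E * (Eᵀ * X)) := frob_mono (fsq_relu_sub _ _)
  -- step (ii): right multiplication by W l
  have step_W : ∀ l, ∀ X : Matrix (Fin N) (Fin C) ℝ,
      distTo MS (X * W l) ≤ s * distTo MS X := by
    intro l X
    rw [dist_formula E hortho MS hMS X]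
    calc distTo MS (X * W l) ≤ frobNorm (X * W l - E * ((Eᵀ * X) * W l)) :=
          dist_le_of_mem hMS _ _
      _ = frobNorm ((X - E * (Eᵀ * X)) * W l) := by
          rw [Matrix.sub_mul, ← Matrix.mul_assoc E (Eᵀ * X) (W l)]
      _ ≤ s * frobNorm (X - E * (Eᵀ * X)) :=
          frob_scale hs (fsq_mulW (W l) s (hW l) _)
  -- step (i): left multiplication by hatA
  have hAE : hatA * E = E := by
    ext i m
    have hm : (fun i => E i m) ∈ Submodule.span ℝ (Set.range fun m => fun i => E i m) :=
      Submodule.subset_span ⟨m, rfl⟩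
    have := congrFun ((hEig1 (fun i => E i m)).mpr hm) i
    rw [Matrix.mul_apply]
    rw [show hatA.mulVec (fun i => E i m) i = ∑ k, hatA i k * E k m from rfl] at this
    exact this
  have step_A : ∀ X : Matrix (Fin N) (Fin C) ℝ,
      distTo MS (hatA * X) ≤ lam * distTo MS X := by
    intro X
    rw [dist_formula E hortho MS hMS X]
    calc distTo MS (hatA * X) ≤ frobNorm (hatA * X - E * (Eᵀ * X)) :=
          dist_le_of_mem hMS _ _
      _ = frobNorm (hatA * (X - E * (Eᵀ * X))) := by
          rw [Matrix.mul_sub, ← Matrix.mul_assoc hatA E (Eᵀ * X), hAE]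
      _ ≤ lam * frobNorm (X - E * (Eᵀ * X)) :=
          frob_scale hlam0 (fsq_mulA hatA hsymm E lam hEig1 hOther _ (resid_ortho E hortho X))
  have dist_nonneg' : ∀ X : Matrix (Fin N) (Fin C) ℝ, 0 ≤ distTo MS X := by
    intro X
    rw [dist_formula E hortho MS hMS X]
    exact frob_nonneg _
  have part1 : ∀ l, distTo MS (H (l + 1)) ≤ s * lam * distTo MS (H l) := by
    intro l
    rw [hrec l]
    calc distTo MS (relu (hatA * H l * W l)) ≤ distTo MS (hatA * H l * W l) := step_relu _
      _ ≤ s * distTo MS (hatA * H l) := step_W l _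
      _ ≤ s * (lam * distTo MS (H l)) := by
          exact mul_le_mul_of_nonneg_left (step_A _) hs
      _ = s * lam * distTo MS (H l) := by ring
  have part2 : ∀ l, distTo MS (H l) ≤ (s * lam) ^ l * distTo MS (H 0) := by
    intro l
    induction l with
    | zero => simp
    | succ n ih =>
      calc distTo MS (H (n + 1)) ≤ s * lam * distTo MS (H n) := part1 n
        _ ≤ s * lam * ((s * lam) ^ n * distTo MS (H 0)) :=
            mul_le_mul_of_nonneg_left ih (by positivity)
        _ = (s * lam) ^ (n + 1) * distTo MS (H 0) := by ring
  refine ⟨part1, part2, fun hsl => ?_⟩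
  have htend : Tendsto (fun l : ℕ => (s * lam) ^ l * distTo MS (H 0)) atTop (nhds 0) := by
    have := tendsto_pow_atTop_nhds_zero_of_lt_one (by positivity : (0:ℝ) ≤ s * lam) hsl
    simpa using this.mul_const (distTo MS (H 0))
  exact squeeze_zero (fun l => dist_nonneg' (H l)) part2 htend
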